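/- arXiv:cs/0101030 — 2 statements merged into one kernel-verified Lean document; each statement's English description precedes it below -/
import Mathlib

section
/- Let p ≥ 1 and n ≥ p + 1 be integers, and let n'₁, …, n'_{p+1} be positive integers with n'₁ + ⋯ + n'_{p+1} = n. Then Σ_{i=1}^{p+1} n'_i·log₂ n'_i ≤ (n − p)·log₂(n − p); that is, the sum is maximized when one of the n'_i equals n − p and all others equal 1. -/
open Real in
lemma two_var_log (a b : ℝ) (ha : 1 ≤ a) (hb : 1 ≤ b) :
    a * Real.log a + b * Real.log b ≤ (a + b - 1) * Real.log (a + b - 1) := by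
  set s := a + b - 1 with hsdef
  rcases eq_or_lt_of_le (show (1:ℝ) ≤ s by simp [hsdef]; linarith) with h1 | h1
  · have ha' : a = 1 := by simp [hsdef] at h1; linarith
    have hb' : b = 1 := by simp [hsdef] at h1; linarith
    simp [ha', hb', ← h1]
  · have hcon := Real.convexOn_mul_log
    have h1s : (1:ℝ) ∈ Set.Ici (0:ℝ) := by norm_num
    have hss : s ∈ Set.Ici (0:ℝ) := by simp [Set.mem_Ici]; linarith
    have hd : (0:ℝ) < s - 1 := by linarith
    have hA := hcon.2 h1s hss (show (0:ℝ) ≤ (s - a)/(s-1) by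
        apply div_nonneg; simp [hsdef]; linarith; linarith)
      (show (0:ℝ) ≤ (a-1)/(s-1) by apply div_nonneg <;> linarith)
      (by field_simp; ring)
    have hB := hcon.2 h1s hss (show (0:ℝ) ≤ (s - b)/(s-1) by
        apply div_nonneg; simp [hsdef]; linarith; linarith)
      (show (0:ℝ) ≤ (b-1)/(s-1) by apply div_nonneg <;> linarith)
      (by field_simp; ring)
    have hea : ((s - a)/(s-1)) • (1:ℝ) + ((a-1)/(s-1)) • s = a := by
      simp only [smul_eq_mul]; field_simp; ring
    have heb : ((s - b)/(s-1)) • (1:ℝ) + ((b-1)/(s-1)) • s = b := by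
      simp only [smul_eq_mul]; field_simp; ring
    rw [hea] at hA
    rw [heb] at hB
    simp only [Real.log_one, mul_zero, smul_eq_mul, mul_one, zero_add] at hA hB
    have hsum : (a-1)/(s-1) + (b-1)/(s-1) = 1 := by
      field_simp; simp [hsdef]; ring
    calc a * Real.log a + b * Real.log b
        ≤ (a-1)/(s-1) * (s * Real.log s) + (b-1)/(s-1) * (s * Real.log s) := by
          linarith
      _ = s * Real.log s := by rw [← add_mul, hsum, one_mul]

lemma two_var (a b : ℝ) (ha : 1 ≤ a) (hb : 1 ≤ b) :
    a * Real.logb 2 a + b * Real.logb 2 b ≤ (a + b - 1) * Real.logb 2 (a + b - 1) := by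
  have hL : (0:ℝ) < Real.log 2 := Real.log_pos one_lt_two
  simp only [Real.logb, ← mul_div_assoc, ← add_div]
  gcongr
  exact two_var_log a b ha hb

open Finset in
lemma sum_aux {ι : Type*} (s : Finset ι) (hs : s.Nonempty) (f : ι → ℕ)
    (hf : ∀ i ∈ s, 1 ≤ f i) :
    ∑ i ∈ s, (f i : ℝ) * Real.logb 2 (f i) ≤
      ((∑ i ∈ s, (f i : ℝ)) - (s.card - 1)) *
        Real.logb 2 ((∑ i ∈ s, (f i : ℝ)) - (s.card - 1)) := by
  induction hs using Finset.Nonempty.cons_induction with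
  | singleton a => simp
  | cons a t hat htne ih =>
    have hf' : ∀ i ∈ t, 1 ≤ f i := fun i hi => hf i (Finset.mem_cons_of_mem hi)
    have ih' := ih hf'
    rw [Finset.sum_cons, Finset.sum_cons, Finset.card_cons]
    have hfa : (1:ℝ) ≤ (f a : ℝ) := by
      exact_mod_cast hf a (Finset.mem_cons_self a t)
    have hT : (1:ℝ) ≤ (∑ i ∈ t, (f i : ℝ)) - (t.card - 1) := by
      have hnat : t.card ≤ ∑ i ∈ t, f i := by
        calc t.card = ∑ _i ∈ t, 1 := by simp
          _ ≤ _ := Finset.sum_le_sum hf'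
      have : (t.card : ℝ) ≤ ∑ i ∈ t, (f i : ℝ) := by exact_mod_cast hnat
      linarith
    have key := two_var (f a) ((∑ i ∈ t, (f i : ℝ)) - (t.card - 1)) hfa hT
    have hmono : (f a : ℝ) * Real.logb 2 (f a) + ∑ i ∈ t, (f i : ℝ) * Real.logb 2 (f i)
        ≤ (f a : ℝ) * Real.logb 2 (f a) +
          ((∑ i ∈ t, (f i : ℝ)) - (t.card - 1)) *
            Real.logb 2 ((∑ i ∈ t, (f i : ℝ)) - (t.card - 1)) := by linarith
    refine hmono.trans (key.trans (le_of_eq ?_))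
    push_cast
    ring_nf

open Finset in
/-- Let `p ≥ 1` and `n ≥ p + 1` be integers, and let `n'₁, …, n'_{p+1}` be
positive integers with `n'₁ + ⋯ + n'_{p+1} = n`.  Then
`Σ_{i=1}^{p+1} n'_i·log₂ n'_i ≤ (n − p)·log₂(n − p)`. -/
theorem sum_mul_logb_le (p n : ℕ) (hp : 1 ≤ p) (hn : p + 1 ≤ n)
    (f : Fin (p + 1) → ℕ) (hf : ∀ i, 1 ≤ f i) (hsum : ∑ i, f i = n) :
    ∑ i, (f i : ℝ) * Real.logb 2 (f i) ≤ ((n : ℝ) - p) * Real.logb 2 ((n : ℝ) - p) := by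
  have := sum_aux Finset.univ Finset.univ_nonempty f (fun i _ => hf i)
  have hsum' : ∑ i, (f i : ℝ) = (n : ℝ) := by exact_mod_cast congrArg (Nat.cast (R := ℝ)) hsum
  rw [hsum'] at this
  simpa [Finset.card_univ] using this
end

section
/- Let S1 and S2 be evolutionary trees and let u be an internal vertex of S1 and v an internal vertex of S2. Then rr(S1^u, S2^v) = max{ mm(K(u,S1), K(v,S2)), mm(u, K(v,S2)), mm(K(u,S1), v) }. -/
/-- A leaf-labeled rooted tree: either a labeled leaf, or an internal
vertex with a list of subtrees. -/
inductive ETree (L : Type) : Type where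
  | leaf : L → ETree L
  | node : List (ETree L) → ETree L

namespace ETree

variable {L : Type} [DecidableEq L]

/-- The list of leaf labels of a tree. -/
def labelList : ETree L → List L
  | leaf a => [a]
  | node ts => ts.attach.flatMap fun ⟨t, _⟩ => labelList t

/-- The label set of a tree: the set of its leaf labels. -/
def labelSet (t : ETree L) : Finset L := (labelList t).toFinset

/-- The list of children (as subtrees) of the root of a tree. -/
def children : ETree L → List (ETree L)
  | leaf _ => []
  | node ts => ts

/-- A rooted tree is homeomorphic if every internal vertex has at least two children. -/
inductive Homeo : ETree L → Prop where
  | leaf (a : L) : Homeo (leaf a)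
  | node (ts : List (ETree L)) (hlen : 2 ≤ ts.length) (h : ∀ t ∈ ts, Homeo t) :
      Homeo (node ts)

/-- An evolutionary tree: a homeomorphic rooted tree whose leaves carry distinct labels. -/
def IsEvolutionary (t : ETree L) : Prop := Homeo t ∧ (labelList t).Nodup

/-- `restrict t s` is the homeomorphic version `t‖s` of the tree obtained from `t` by
deleting all leaves with labels outside `s` (contracting away all vertices that are
not leaves or lowest common ancestors of two leaves); `none` if nothing remains. -/
def restrict : ETree L → Finset L → Option (ETree L)
  | leaf a, s => if a ∈ s then some (leaf a) else none
  | node ts, s =>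
      match ts.attach.filterMap (fun ⟨t, _⟩ => restrict t s) with
      | [] => none
      | [u] => some u
      | us => some (node us)

/-- Label-preserving isomorphism of leaf-labeled rooted trees. -/
inductive Iso : ETree L → ETree L → Prop where
  | leaf (a : L) : Iso (leaf a) (leaf a)
  | node (ts us : List (ETree L)) (e : Fin ts.length ≃ Fin us.length)
      (h : ∀ i : Fin ts.length, Iso (ts.get i) (us.get (e i))) :
      Iso (node ts) (node us)

/-- Isomorphism of possibly-empty trees. -/
def IsoO : Option (ETree L) → Option (ETree L) → Prop
  | none, none => True
  | some t, some u => Iso t u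
  | _, _ => False

/-- `rr T₁ T₂`: the number of leaves in a maximum agreement subtree of `T₁` and `T₂`,
i.e. the maximum cardinality of a subset `s` of the common labels such that `T₁‖s`
and `T₂‖s` are label-preservingly isomorphic. -/
noncomputable def rr (t₁ t₂ : ETree L) : ℕ :=
  sSup {k | ∃ s : Finset L, s ⊆ labelSet t₁ ∩ labelSet t₂ ∧ s.card = k ∧
    IsoO (restrict t₁ s) (restrict t₂ s)}

end ETree

namespace ETree

variable {L : Type} [DecidableEq L]

noncomputable instance : DecidableEq (ETree L) := Classical.decEq _

/-- `mm U V`: the maximum weight of a matching of the complete bipartite graph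
`(U, V, U×V)` in which the edge `(u,v)` has weight `rr u v` (note that in our
representation a vertex of a tree is identified with the subtree it roots, so the
weight of `(u,v)` is `rr` of the two rooted subtrees). -/
noncomputable def mm (U V : Finset (ETree L)) : ℕ :=
  sSup {w | ∃ M : Finset (ETree L × ETree L),
    (∀ p ∈ M, p.1 ∈ U ∧ p.2 ∈ V) ∧
    (∀ p ∈ M, ∀ q ∈ M, p ≠ q → p.1 ≠ q.1 ∧ p.2 ≠ q.2) ∧
    w = ∑ p ∈ M, rr p.1 p.2}

/-- `mmb U V x y`: the maximum weight of a matching of the complete bipartite graph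
`(U, V, U×V)` (edge `(u,v)` weighted by `rr u v`) that does not use the edge `(x,y)`. -/
noncomputable def mmb (U V : Finset (ETree L)) (x y : ETree L) : ℕ :=
  sSup {w | ∃ M : Finset (ETree L × ETree L),
    (∀ p ∈ M, p.1 ∈ U ∧ p.2 ∈ V) ∧
    (∀ p ∈ M, ∀ q ∈ M, p ≠ q → p.1 ≠ q.1 ∧ p.2 ≠ q.2) ∧
    (x, y) ∉ M ∧
    w = ∑ p ∈ M, rr p.1 p.2}

/-- `IsSubtree s t`: `s` occurs as a rooted subtree `t^u` of `t` (vertices of a tree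
with distinct leaf labels are identified with the subtrees they root). -/
inductive IsSubtree : ETree L → ETree L → Prop where
  | refl (t : ETree L) : IsSubtree t t
  | child {s c : ETree L} {ts : List (ETree L)} (hc : c ∈ ts) (h : IsSubtree s c) :
      IsSubtree s (node ts)

end ETree


namespace ETree

variable {L : Type} [DecidableEq L]

set_option linter.unusedSectionVars false
set_option linter.unusedVariables false

/-- Custom induction principle for `ETree`. -/
theorem ind {P : ETree L → Prop} (hleaf : ∀ a, P (leaf a))
    (hnode : ∀ ts, (∀ t ∈ ts, P t) → P (node ts)) : ∀ t, P t := fun t =>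
  match t with
  | leaf a => hleaf a
  | node ts => hnode ts fun u hu => ind hleaf hnode u
termination_by t => sizeOf t
decreasing_by
  have := List.sizeOf_lt_of_mem hu
  simp only [node.sizeOf_spec]
  omega

theorem labelList_node (ts : List (ETree L)) :
    labelList (node ts) = ts.flatMap labelList := by
  rw [labelList]
  conv_rhs => rw [← List.attach_map_subtype_val ts, List.flatMap_map]

theorem restrict_node (ts : List (ETree L)) (s : Finset L) :
    restrict (node ts) s =
      match ts.filterMap (fun t => restrict t s) with
      | [] => none
      | [u] => some u
      | us => some (node us) := by
  have h : ts.attach.filterMap (fun x : {x // x ∈ ts} => restrict x.1 s)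
      = ts.filterMap (fun t => restrict t s) := by
    conv_rhs => rw [← List.attach_map_subtype_val ts, List.filterMap_map]
    congr 1
  rw [restrict, ← h]

end ETree

namespace ETree

variable {L : Type} [DecidableEq L]

set_option linter.unusedSectionVars false

theorem flatMap_option_elim {α β γ : Type*} (l : List α) (g : α → Option β) (h : β → List γ) :
    l.flatMap (fun a => (g a).elim [] h) = (l.filterMap g).flatMap h := by
  induction l with
  | nil => rfl
  | cons a l ih => cases hg : g a <;> simp [hg, ih, List.filterMap_cons]

theorem restrict_labels (t : ETree L) : ∀ s : Finset L,
    (restrict t s).elim [] labelList = (labelList t).filter (· ∈ s) := by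
  induction t using ind with
  | hleaf a => intro s; by_cases h : a ∈ s <;> simp [restrict, labelList, h]
  | hnode ts IH =>
    intro s
    have key : (labelList (node ts)).filter (· ∈ s)
        = (ts.filterMap (fun t => restrict t s)).flatMap labelList := by
      rw [labelList_node, List.filter_flatMap, ← flatMap_option_elim]
      exact List.flatMap_congr fun t ht => ((IH t ht s).symm.trans (by rfl))
    rw [key, restrict_node]
    rcases hfm : ts.filterMap (fun t => restrict t s) with _ | ⟨u, _ | ⟨u', rest⟩⟩ <;>
      simp [labelList_node]
end ETree

namespace ETree

variable {L : Type} [DecidableEq L]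

set_option linter.unusedSectionVars false

theorem restrict_some_ne_nil (t : ETree L) : ∀ (s : Finset L) (r : ETree L),
    restrict t s = some r → labelList r ≠ [] := by
  induction t using ind with
  | hleaf a =>
    intro s r h
    by_cases ha : a ∈ s <;> simp [restrict, ha] at h
    subst h; simp [labelList]
  | hnode ts IH =>
    intro s r h
    rw [restrict_node] at h
    rcases hfm : ts.filterMap (fun t => restrict t s) with _ | ⟨u, _ | ⟨u', rest⟩⟩ <;>
        rw [hfm] at h
    · simp at h
    · have hu : u ∈ ts.filterMap (fun t => restrict t s) := by rw [hfm]; simp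
      rw [List.mem_filterMap] at hu
      obtain ⟨c, hc, hcu⟩ := hu
      simp only [Option.some.injEq] at h
      subst h
      exact IH c hc s _ hcu
    · have hu : u ∈ ts.filterMap (fun t => restrict t s) := by rw [hfm]; simp
      rw [List.mem_filterMap] at hu
      obtain ⟨c, hc, hcu⟩ := hu
      simp only [Option.some.injEq] at h
      subst h
      have : labelList u ≠ [] := IH c hc s u hcu
      intro hnil
      rw [labelList_node] at hnil
      simp only [List.flatMap_cons, List.append_eq_nil_iff] at hnil
      exact this hnil.1

theorem restrict_eq_none_iff (t : ETree L) (s : Finset L) :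
    restrict t s = none ↔ (labelList t).filter (· ∈ s) = [] := by
  have h := restrict_labels t s
  constructor
  · intro hn; rw [hn] at h; exact h.symm
  · intro hf
    cases hr : restrict t s with
    | none => rfl
    | some r =>
      exfalso
      rw [hr, hf] at h
      exact restrict_some_ne_nil t s r hr h

theorem restrict_some_labels {t r : ETree L} {s : Finset L} (h : restrict t s = some r) :
    labelList r = (labelList t).filter (· ∈ s) := by
  have := restrict_labels t s
  rwa [h] at this

theorem mem_labelSet {a : L} {t : ETree L} : a ∈ labelSet t ↔ a ∈ labelList t := by
  simp [labelSet]

theorem labelSet_subset_node {c : ETree L} {ts : List (ETree L)} (hc : c ∈ ts) :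
    labelSet c ⊆ labelSet (node ts) := by
  intro a ha
  rw [mem_labelSet] at *
  rw [labelList_node, List.mem_flatMap]
  exact ⟨c, hc, ha⟩

theorem mem_labelSet_node {a : L} {ts : List (ETree L)} :
    a ∈ labelSet (node ts) ↔ ∃ c ∈ ts, a ∈ labelSet c := by
  simp [labelSet, labelList_node, List.mem_flatMap]

theorem restrict_some_labelSet {t r : ETree L} {s : Finset L} (h : restrict t s = some r) :
    labelSet r = labelSet t ∩ s := by
  rw [labelSet, restrict_some_labels h]
  ext a
  simp [labelSet, List.mem_filter]

theorem restrict_congr {s s' : Finset L} (t : ETree L)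
    (h : ∀ a ∈ labelList t, (a ∈ s ↔ a ∈ s')) : restrict t s = restrict t s' := by
  induction t using ind with
  | hleaf a =>
    have := h a (by simp [labelList])
    by_cases ha : a ∈ s
    · simp [restrict, ha, this.mp ha]
    · have ha' : a ∉ s' := fun h' => ha (this.mpr h')
      simp [restrict, ha, ha']
  | hnode ts IH =>
    rw [restrict_node, restrict_node]
    have : ts.filterMap (fun t => restrict t s) = ts.filterMap (fun t => restrict t s') := by
      refine List.filterMap_congr fun c hc => IH c hc fun a ha => h a ?_
      rw [labelList_node, List.mem_flatMap]; exact ⟨c, hc, ha⟩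
    rw [this]

theorem restrict_empty (t : ETree L) : restrict t (∅ : Finset L) = none := by
  rw [restrict_eq_none_iff]
  simp

end ETree

namespace ETree

variable {L : Type} [DecidableEq L]

set_option linter.unusedSectionVars false

theorem Iso.rfl : ∀ t : ETree L, Iso t t := by
  intro t
  induction t using ind with
  | hleaf a => exact .leaf a
  | hnode ts IH => exact .node ts ts (Equiv.refl _) fun i => IH _ (ts.get_mem i)

theorem Iso.labelSet_eq {t u : ETree L} (h : Iso t u) : labelSet t = labelSet u := by
  induction h with
  | leaf a => rfl
  | node ts us e h ih =>
    ext a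
    simp only [mem_labelSet_node]
    constructor
    · rintro ⟨c, hc, hac⟩
      obtain ⟨i, hi⟩ := List.mem_iff_get.mp hc
      exact ⟨us.get (e i), us.get_mem (e i), by rw [← ih i, hi]; exact hac⟩
    · rintro ⟨d, hd, had⟩
      obtain ⟨j, hj⟩ := List.mem_iff_get.mp hd
      refine ⟨ts.get (e.symm j), ts.get_mem (e.symm j), ?_⟩
      rw [ih (e.symm j), e.apply_symm_apply, hj]
      exact had

theorem Iso.trans : ∀ {t u v : ETree L}, Iso t u → Iso u v → Iso t v := by
  intro t u v h1
  induction h1 generalizing v with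
  | leaf a => exact fun h2 => h2
  | node ts us e h ih =>
    intro h2
    cases h2 with
    | node _ ws e2 h2 =>
      exact .node ts ws (e.trans e2) fun i => ih i (h2 (e i))

theorem iso_node_cons {a b : ETree L} {l₁ l₂ : List (ETree L)} (hab : Iso a b)
    (h : Iso (node l₁) (node l₂)) : Iso (node (a :: l₁)) (node (b :: l₂)) := by
  cases h with
  | node _ _ e h =>
    refine .node (a :: l₁) (b :: l₂)
      (((finSuccEquiv l₁.length).trans (Equiv.optionCongr e)).trans
        (finSuccEquiv l₂.length).symm) fun i => ?_
    induction i using Fin.cases with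
    | zero => simpa using hab
    | succ j => simpa using h j

theorem iso_node_perm {l₁ l₂ : List (ETree L)} (h : l₁.Perm l₂) :
    Iso (node l₁) (node l₂) := by
  induction h with
  | nil => exact .node [] [] (Equiv.refl _) fun i => i.elim0
  | cons a h ih => exact iso_node_cons (Iso.rfl a) ih
  | trans h1 h2 ih1 ih2 => exact ih1.trans ih2
  | swap x y l =>
    refine .node _ _ (Equiv.swap (0 : Fin (l.length+2)) (1 : Fin (l.length+2))) fun i => ?_
    rcases i with ⟨_ | _ | k, hi⟩
    · have hs : Equiv.swap (0 : Fin (l.length+2)) 1 ⟨0, hi⟩ = ⟨1, by omega⟩ := by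
        have h0 : (⟨0, hi⟩ : Fin (l.length+2)) = 0 := rfl
        rw [h0, Equiv.swap_apply_left]
        simp [Fin.ext_iff]
      show Iso ((y :: x :: l).get ⟨0, hi⟩)
        ((x :: y :: l).get ((Equiv.swap (0 : Fin (l.length+2)) 1) ⟨0, hi⟩))
      rw [hs]
      exact Iso.rfl _
    · have hs : Equiv.swap (0 : Fin (l.length+2)) 1 ⟨0+1, hi⟩ = ⟨0, by omega⟩ := by
        have h0 : (⟨0+1, hi⟩ : Fin (l.length+2)) = 1 := by simp [Fin.ext_iff]
        rw [h0, Equiv.swap_apply_right]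
        simp [Fin.ext_iff]
      show Iso ((y :: x :: l).get ⟨0+1, hi⟩)
        ((x :: y :: l).get ((Equiv.swap (0 : Fin (l.length+2)) 1) ⟨0+1, hi⟩))
      rw [hs]
      exact Iso.rfl _
    · have hs : Equiv.swap (0 : Fin (l.length+2)) 1 ⟨k+1+1, hi⟩ = ⟨k+1+1, hi⟩ := by
        rw [Equiv.swap_apply_of_ne_of_ne] <;> simp [Fin.ext_iff]
      show Iso ((y :: x :: l).get ⟨k+1+1, hi⟩)
        ((x :: y :: l).get ((Equiv.swap (0 : Fin (l.length+2)) 1) ⟨k+1+1, hi⟩))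
      rw [hs]
      exact Iso.rfl _

end ETree

namespace ETree

variable {L : Type} [DecidableEq L]

set_option linter.unusedSectionVars false

theorem coe_cons_inv {α : Type*} [DecidableEq α] {l : List α} {a : α} {m : Multiset α}
    (h : (↑l : Multiset α) = a ::ₘ m) : ∃ l', l.Perm (a :: l') ∧ (↑l' : Multiset α) = m := by
  have ha : a ∈ l := by
    rw [← List.mem_toFinset]
    have : a ∈ (↑l : Multiset α) := by rw [h]; simp
    simpa [List.mem_toFinset] using this
  refine ⟨l.erase a, List.perm_cons_erase ha, ?_⟩
  have h2 : (↑l : Multiset α) = a ::ₘ ↑(l.erase a) := by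
    rw [Multiset.coe_eq_coe.mpr (List.perm_cons_erase ha)]
    simp [Multiset.cons_coe]
  rw [h2] at h
  exact (Multiset.cons_inj_right a).mp h

theorem iso_node_of_rel : ∀ l₁ l₂ : List (ETree L),
    Multiset.Rel Iso (↑l₁ : Multiset (ETree L)) (↑l₂ : Multiset (ETree L)) →
      Iso (node l₁) (node l₂) := by
  intro l₁
  induction l₁ with
  | nil =>
    intro l₂ h
    rw [show ((↑([] : List (ETree L))) : Multiset (ETree L)) = 0 from rfl] at h
    rw [Multiset.rel_zero_left] at h
    rw [(Multiset.coe_eq_zero l₂).mp h]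
    exact .node [] [] (Equiv.refl _) fun i => i.elim0
  | cons a l₁ ih =>
    intro l₂ h
    rw [show ((↑(a :: l₁) : Multiset (ETree L))) = a ::ₘ ↑l₁ from rfl] at h
    rcases Multiset.rel_cons_left.mp h with ⟨b, bs, hab, hrel, hbs⟩
    obtain ⟨l₂', hperm, hcoe⟩ := coe_cons_inv hbs
    exact (iso_node_cons hab (ih l₂' (by rw [hcoe]; exact hrel))).trans
      (iso_node_perm hperm.symm)

theorem rel_of_iso_node {l₁ l₂ : List (ETree L)} (h : Iso (node l₁) (node l₂)) :
    Multiset.Rel Iso (↑l₁ : Multiset (ETree L)) (↑l₂ : Multiset (ETree L)) := by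
  cases h with
  | node _ _ e h =>
    have h₁ : (↑l₁ : Multiset (ETree L))
        = Multiset.map l₁.get ↑(List.finRange l₁.length) := by
      rw [Multiset.map_coe, List.map_get_finRange]
    have h₂ : (↑l₂ : Multiset (ETree L))
        = Multiset.map (fun i => l₂.get (e i)) ↑(List.finRange l₁.length) := by
      have hp : ((List.finRange l₁.length).map e).Perm (List.finRange l₂.length) := by
        apply List.perm_of_nodup_nodup_toFinset_eq
        · exact (List.nodup_finRange _).map e.injective
        · exact List.nodup_finRange _
        · ext j
          simp only [List.mem_toFinset, List.mem_map, List.mem_finRange, true_and]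
          exact ⟨fun _ => trivial, fun _ => ⟨e.symm j, e.apply_symm_apply j⟩⟩
      calc (↑l₂ : Multiset (ETree L)) = Multiset.map l₂.get ↑(List.finRange l₂.length) := by
            rw [Multiset.map_coe, List.map_get_finRange]
        _ = Multiset.map l₂.get ↑((List.finRange l₁.length).map e) := by
            rw [Multiset.coe_eq_coe.mpr hp]
        _ = Multiset.map (fun i => l₂.get (e i)) ↑(List.finRange l₁.length) := by
            rw [Multiset.map_coe, Multiset.map_coe, List.map_map]
            rfl
    rw [h₁, h₂, Multiset.rel_map]
    exact Multiset.rel_refl_of_refl_on fun i _ => h i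

theorem rel_filterMap {α : Type*} (m : Multiset α) (g₁ g₂ : α → Option (ETree L))
    (h : ∀ a ∈ m, IsoO (g₁ a) (g₂ a)) :
    Multiset.Rel Iso (m.filterMap g₁) (m.filterMap g₂) := by
  induction m using Multiset.induction_on with
  | empty => simp only [Multiset.filterMap_zero]; exact Multiset.rel_zero_left.mpr rfl
  | cons a s ih =>
    have ha := h a (by simp)
    have ih' := ih fun b hb => h b (by simp [hb])
    cases h1 : g₁ a with
    | none =>
      cases h2 : g₂ a with
      | none =>
        rw [Multiset.filterMap_cons_none _ _ h1, Multiset.filterMap_cons_none _ _ h2]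
        exact ih'
      | some b =>
        rw [h1, h2] at ha
        exact (ha : False).elim
    | some r =>
      cases h2 : g₂ a with
      | none =>
        rw [h1, h2] at ha
        exact (ha : False).elim
      | some b =>
        rw [Multiset.filterMap_cons_some _ _ _ h1, Multiset.filterMap_cons_some _ _ _ h2]
        rw [h1, h2] at ha
        exact Multiset.Rel.cons (ha : Iso r b) ih'

theorem isoO_of_rel_restrict {ts₁ ts₂ : List (ETree L)} {s₁ s₂ : Finset L}
    (h : Multiset.Rel Iso
      (↑(ts₁.filterMap (fun t => restrict t s₁)) : Multiset (ETree L))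
      (↑(ts₂.filterMap (fun t => restrict t s₂)) : Multiset (ETree L))) :
    IsoO (restrict (node ts₁) s₁) (restrict (node ts₂) s₂) := by
  rw [restrict_node, restrict_node]
  have hcard := Multiset.card_eq_card_of_rel h
  rw [Multiset.coe_card, Multiset.coe_card] at hcard
  rcases h1 : ts₁.filterMap (fun t => restrict t s₁) with _ | ⟨a, _ | ⟨a', r1⟩⟩ <;>
    rcases h2 : ts₂.filterMap (fun t => restrict t s₂) with _ | ⟨b, _ | ⟨b', r2⟩⟩ <;>
      rw [h1, h2] at h hcard <;> simp only [List.length] at hcard <;> try omega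
  · exact trivial
  · rcases Multiset.rel_cons_left.mp (show Multiset.Rel Iso (a ::ₘ 0) {b} from h) with ⟨b'', bs', hab, hrel, hb⟩
    obtain ⟨hbb, hbs0⟩ := (Multiset.singleton_eq_cons_iff _).mp hb
    exact (show Iso a b by rw [hbb]; exact hab)
  · exact (iso_node_of_rel _ _ h : Iso (node (a :: a' :: r1)) (node (b :: b' :: r2)))

end ETree

namespace ETree

variable {L : Type} [DecidableEq L]

set_option linter.unusedSectionVars false

theorem Homeo.labelList_ne_nil {t : ETree L} (h : Homeo t) : labelList t ≠ [] := by
  induction h with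
  | leaf a => simp [labelList]
  | node ts hlen h ih =>
    rw [labelList_node]
    intro hnil
    rw [List.flatMap_eq_nil_iff] at hnil
    rcases ts with _ | ⟨t0, ts'⟩
    · simp at hlen
    · exact ih t0 (by simp) (hnil t0 (by simp))

theorem Homeo.subtree {t S : ETree L} (hs : IsSubtree t S) (h : Homeo S) : Homeo t := by
  induction hs with
  | refl => exact h
  | child hc hsub ih =>
    apply ih
    cases h with
    | node ts hlen h' => exact h' _ hc

theorem nodup_subtree {t S : ETree L} (hs : IsSubtree t S) (h : (labelList S).Nodup) :
    (labelList t).Nodup := by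
  induction hs with
  | refl => exact h
  | child hc hsub ih =>
    apply ih
    rw [labelList_node] at h
    exact (List.nodup_flatMap.mp h).1 _ hc

theorem children_disjoint {ts : List (ETree L)} (h : (labelList (node ts)).Nodup) :
    ∀ a ∈ ts, ∀ b ∈ ts, a ≠ b → Disjoint (labelSet a) (labelSet b) := by
  rw [labelList_node] at h
  have hp := (List.nodup_flatMap.mp h).2
  intro a ha b hb hab
  have key : (Function.onFun List.Disjoint labelList) a b := by
    refine @List.Pairwise.forall _ _ _ ⟨?_⟩ hp _ ha _ hb hab
    intro x y hxy
    exact List.Disjoint.symm hxy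
  rw [Finset.disjoint_left]
  intro x hx hy
  rw [mem_labelSet] at hx hy
  exact key hx hy

theorem children_nodup {ts : List (ETree L)} (h : (labelList (node ts)).Nodup)
    (hne : ∀ t ∈ ts, labelList t ≠ []) : ts.Nodup := by
  rw [labelList_node] at h
  have hp := (List.nodup_flatMap.mp h).2
  refine List.Pairwise.imp_of_mem ?_ hp
  intro a b ha hb hd hab
  subst hab
  obtain ⟨x, hx⟩ := List.exists_mem_of_ne_nil _ (hne a ha)
  exact hd hx hx

theorem toFinset_val_of_nodup {α : Type*} [DecidableEq α] {l : List α} (h : l.Nodup) :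
    l.toFinset.val = (↑l : Multiset α) := by
  have : (↑l : Multiset α).Nodup := h
  simp [List.toFinset, Multiset.toFinset, Multiset.dedup_eq_self.mpr this]

end ETree

namespace ETree

variable {L : Type} [DecidableEq L]

set_option linter.unusedSectionVars false

theorem rr_bdd (t₁ t₂ : ETree L) :
    BddAbove {k | ∃ s : Finset L, s ⊆ labelSet t₁ ∩ labelSet t₂ ∧ s.card = k ∧
      IsoO (restrict t₁ s) (restrict t₂ s)} := by
  refine ⟨(labelSet t₁).card, ?_⟩
  rintro k ⟨s, hsub, rfl, hiso⟩
  exact Finset.card_le_card (hsub.trans Finset.inter_subset_left)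

theorem rr_nonempty (t₁ t₂ : ETree L) :
    Set.Nonempty {k | ∃ s : Finset L, s ⊆ labelSet t₁ ∩ labelSet t₂ ∧ s.card = k ∧
      IsoO (restrict t₁ s) (restrict t₂ s)} := by
  refine ⟨0, ∅, by simp, by simp, ?_⟩
  rw [restrict_empty, restrict_empty]
  exact trivial

theorem le_rr {t₁ t₂ : ETree L} (s : Finset L) (hsub : s ⊆ labelSet t₁ ∩ labelSet t₂)
    (hiso : IsoO (restrict t₁ s) (restrict t₂ s)) : s.card ≤ rr t₁ t₂ :=
  le_csSup (rr_bdd t₁ t₂) ⟨s, hsub, rfl, hiso⟩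

theorem rr_le {t₁ t₂ : ETree L} {n : ℕ}
    (h : ∀ s : Finset L, s ⊆ labelSet t₁ ∩ labelSet t₂ →
      IsoO (restrict t₁ s) (restrict t₂ s) → s.card ≤ n) : rr t₁ t₂ ≤ n := by
  apply csSup_le (rr_nonempty t₁ t₂)
  rintro k ⟨s, hsub, rfl, hiso⟩
  exact h s hsub hiso

theorem rr_spec (t₁ t₂ : ETree L) : ∃ s : Finset L, s ⊆ labelSet t₁ ∩ labelSet t₂ ∧
    s.card = rr t₁ t₂ ∧ IsoO (restrict t₁ s) (restrict t₂ s) :=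
  Nat.sSup_mem (rr_nonempty t₁ t₂) (rr_bdd t₁ t₂)

theorem rr_le_card_left (t₁ t₂ : ETree L) : rr t₁ t₂ ≤ (labelSet t₁).card :=
  rr_le fun s hsub _ => Finset.card_le_card (hsub.trans Finset.inter_subset_left)

theorem le_mm {U V : Finset (ETree L)} (M : Finset (ETree L × ETree L))
    (h1 : ∀ p ∈ M, p.1 ∈ U ∧ p.2 ∈ V)
    (h2 : ∀ p ∈ M, ∀ q ∈ M, p ≠ q → p.1 ≠ q.1 ∧ p.2 ≠ q.2) :
    ∑ p ∈ M, rr p.1 p.2 ≤ mm U V := by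
  apply le_csSup
  · refine ⟨∑ u ∈ U, (labelSet u).card, ?_⟩
    rintro w ⟨M', hM1, hM2, rfl⟩
    calc ∑ p ∈ M', rr p.1 p.2 ≤ ∑ p ∈ M', (labelSet p.1).card :=
          Finset.sum_le_sum fun p _ => rr_le_card_left p.1 p.2
      _ = ∑ u ∈ M'.image Prod.fst, (labelSet u).card := by
          rw [Finset.sum_image]
          intro p hp q hq hpq
          by_contra hne
          exact (hM2 p hp q hq hne).1 hpq
      _ ≤ ∑ u ∈ U, (labelSet u).card := by
          apply Finset.sum_le_sum_of_subset
          intro u hu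
          rw [Finset.mem_image] at hu
          obtain ⟨p, hp, rfl⟩ := hu
          exact (hM1 p hp).1
  · exact ⟨M, h1, h2, rfl⟩

theorem mm_le {U V : Finset (ETree L)} {n : ℕ}
    (h : ∀ M : Finset (ETree L × ETree L), (∀ p ∈ M, p.1 ∈ U ∧ p.2 ∈ V) →
      (∀ p ∈ M, ∀ q ∈ M, p ≠ q → p.1 ≠ q.1 ∧ p.2 ≠ q.2) →
        ∑ p ∈ M, rr p.1 p.2 ≤ n) : mm U V ≤ n := by
  have hne : Set.Nonempty {w | ∃ M : Finset (ETree L × ETree L),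
      (∀ p ∈ M, p.1 ∈ U ∧ p.2 ∈ V) ∧ (∀ p ∈ M, ∀ q ∈ M, p ≠ q → p.1 ≠ q.1 ∧ p.2 ≠ q.2) ∧
      w = ∑ p ∈ M, rr p.1 p.2} := ⟨0, ∅, by simp, by simp, by simp⟩
  apply csSup_le hne
  rintro w ⟨M, h1, h2, rfl⟩
  exact h M h1 h2

end ETree

namespace ETree

variable {L : Type} [DecidableEq L]

set_option linter.unusedSectionVars false

theorem filterMap_eq_singleton_inv {α β : Type*} {l : List α} {g : α → Option β} {r : β}
    (h : l.filterMap g = [r]) :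
    ∃ a ∈ l, g a = some r ∧ ∀ b ∈ l, b ≠ a → g b = none := by
  induction l with
  | nil => simp at h
  | cons a l ih =>
    rw [List.filterMap_cons] at h
    cases hg : g a with
    | none =>
      rw [hg] at h
      obtain ⟨a', ha', hga', hnone⟩ := ih h
      refine ⟨a', List.mem_cons_of_mem _ ha', hga', ?_⟩
      intro b hb hba
      rcases List.mem_cons.mp hb with rfl | hb'
      · exact hg
      · exact hnone b hb' hba
    | some x =>
      rw [hg] at h
      simp only [List.cons.injEq] at h
      obtain ⟨rfl, h2⟩ := h
      refine ⟨a, by simp, hg, ?_⟩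
      intro b hb hba
      rcases List.mem_cons.mp hb with rfl | hb'
      · exact absurd rfl hba
      · exact List.filterMap_eq_nil_iff.mp h2 b hb'

theorem restrict_node_collapse {ts : List (ETree L)} {d : ETree L} {s : Finset L}
    (hd : d ∈ ts) (hnd : ts.Nodup)
    (h : ∀ d' ∈ ts, d' ≠ d → restrict d' s = none) :
    restrict (node ts) s = restrict d s := by
  have key : ts.filterMap (fun t => restrict t s) = (restrict d s).toList := by
    induction ts with
    | nil => simp at hd
    | cons a ts ih =>
      rw [List.filterMap_cons]
      rcases List.mem_cons.mp hd with rfl | hd'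
      · have hrest : ∀ d' ∈ ts, restrict d' s = none := by
          intro d' hd'
          apply h d' (List.mem_cons_of_mem _ hd')
          intro heq; subst heq; exact (List.nodup_cons.mp hnd).1 hd'
        rw [List.filterMap_eq_nil_iff.mpr hrest]
        cases restrict d s <;> rfl
      · have ha : restrict a s = none := by
          apply h a (by simp)
          intro heq; subst heq; exact (List.nodup_cons.mp hnd).1 hd'
        rw [ha]
        exact ih hd' (List.nodup_cons.mp hnd).2
          (fun d' h1 h2 => h d' (List.mem_cons_of_mem _ h1) h2)
  rw [restrict_node, key]
  cases restrict d s with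
  | none => rfl
  | some r => rfl

theorem multiset_filterMap_congr {α β : Type*} {m : Multiset α} {g₁ g₂ : α → Option β}
    (h : ∀ a ∈ m, g₁ a = g₂ a) : m.filterMap g₁ = m.filterMap g₂ := by
  induction m using Multiset.induction_on with
  | empty => simp [Multiset.filterMap_zero]
  | cons a s ih =>
    have ha := h a (by simp)
    have ih' := ih fun b hb => h b (by simp [hb])
    cases hg : g₁ a with
    | none =>
      rw [Multiset.filterMap_cons_none _ _ hg,
        Multiset.filterMap_cons_none _ _ (hg ▸ ha.symm), ih']
    | some b =>
      rw [Multiset.filterMap_cons_some _ _ _ hg,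
        Multiset.filterMap_cons_some _ _ _ (hg ▸ ha.symm), ih']

end ETree

namespace ETree

variable {L : Type} [DecidableEq L]

set_option linter.unusedSectionVars false
set_option maxHeartbeats 1000000

theorem match_lemma : ∀ (n : ℕ) (U V : Finset (ETree L)) (s : Finset L), U.card ≤ n →
    (∀ a ∈ U, ∀ b ∈ U, a ≠ b → Disjoint (labelSet a) (labelSet b)) →
    (∀ a ∈ V, ∀ b ∈ V, a ≠ b → Disjoint (labelSet a) (labelSet b)) →
    (∀ x ∈ s, ∃ c ∈ U, x ∈ labelSet c) →
    Multiset.Rel Iso (U.val.filterMap (fun t => restrict t s))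
      (V.val.filterMap (fun t => restrict t s)) →
    ∃ M : Finset (ETree L × ETree L), (∀ p ∈ M, p.1 ∈ U ∧ p.2 ∈ V) ∧
      (∀ p ∈ M, ∀ q ∈ M, p ≠ q → p.1 ≠ q.1 ∧ p.2 ≠ q.2) ∧
      s.card ≤ ∑ p ∈ M, rr p.1 p.2 := by
  intro n
  induction n with
  | zero =>
    intro U V s hcard hU hV hmem hrel
    have hUe : U = ∅ := Finset.card_eq_zero.mp (Nat.le_zero.mp hcard)
    subst hUe
    have hse : s = ∅ := by
      by_contra hne
      obtain ⟨x, hx⟩ := Finset.nonempty_iff_ne_empty.mpr hne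
      obtain ⟨c, hc, _⟩ := hmem x hx
      simp at hc
    subst hse
    exact ⟨∅, by simp, by simp, by simp⟩
  | succ n ih =>
    intro U V s hcard hU hV hmem hrel
    by_cases hex : ∃ c ∈ U, ∃ r, restrict c s = some r
    · obtain ⟨c, hc, r, hr⟩ := hex
      -- decompose the left multiset
      have hUval : U.val = c ::ₘ (U.erase c).val := by
        rw [Finset.erase_val]
        exact (Multiset.cons_erase (Finset.mem_val.mpr hc)).symm
      rw [hUval, Multiset.filterMap_cons_some (fun t => restrict t s) c (U.erase c).val hr] at hrel
      rcases Multiset.rel_cons_left.mp hrel with ⟨b, B', hIso, hrel', hB⟩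
      have hbmem : b ∈ V.val.filterMap (fun t => restrict t s) := by
        rw [hB]; simp
      obtain ⟨d, hdV, hdb⟩ := (Multiset.mem_filterMap _ _).mp hbmem
      have hdV' : d ∈ V := Finset.mem_val.mp hdV
      have hVval : V.val = d ::ₘ (V.erase d).val := by
        rw [Finset.erase_val]
        exact (Multiset.cons_erase hdV).symm
      rw [hVval, Multiset.filterMap_cons_some (fun t => restrict t s) d (V.erase d).val hdb] at hB
      have hB' : B' = (V.erase d).val.filterMap (fun t => restrict t s) :=
        ((Multiset.cons_inj_right b).mp hB.symm)
      -- label set facts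
      have hrS : labelSet r = labelSet c ∩ s := restrict_some_labelSet hr
      have hbS : labelSet b = labelSet d ∩ s := restrict_some_labelSet hdb
      have hcd : labelSet c ∩ s = labelSet d ∩ s := by
        rw [← hrS, ← hbS, hIso.labelSet_eq]
      -- the smaller label set
      set s' := s \ labelSet c with hs'
      have hU' : ∀ c' ∈ U.erase c, restrict c' s' = restrict c' s := by
        intro c' hc'
        apply restrict_congr
        intro a ha
        have hne := (Finset.mem_erase.mp hc').1
        have hdisj := hU c' (Finset.mem_of_mem_erase hc') c hc hne
        have : a ∉ labelSet c := by
          intro hac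
          exact (Finset.disjoint_left.mp hdisj) (mem_labelSet.mpr ha) hac
        simp [hs', Finset.mem_sdiff, this]
      have hV' : ∀ d' ∈ V.erase d, restrict d' s' = restrict d' s := by
        intro d' hd'
        apply restrict_congr
        intro a ha
        have hne := (Finset.mem_erase.mp hd').1
        have hdisj := hV d' (Finset.mem_of_mem_erase hd') d hdV' hne
        have had' : a ∈ labelSet d' := mem_labelSet.mpr ha
        have : a ∈ s → a ∉ labelSet c := by
          intro has hac
          have : a ∈ labelSet d ∩ s := by
            rw [← hcd]; exact Finset.mem_inter.mpr ⟨hac, has⟩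
          exact (Finset.disjoint_left.mp hdisj) had' (Finset.mem_inter.mp this).1
        simp only [hs', Finset.mem_sdiff]
        exact ⟨fun h => h.1, fun h => ⟨h, this h⟩⟩
      have hrel'' : Multiset.Rel Iso
          ((U.erase c).val.filterMap (fun t => restrict t s'))
          ((V.erase d).val.filterMap (fun t => restrict t s')) := by
        rw [multiset_filterMap_congr (fun a ha => hU' a (Finset.mem_val.mp ha)),
          multiset_filterMap_congr (fun a ha => hV' a (Finset.mem_val.mp ha))]
        rw [← hB']
        exact hrel'
      have hmem' : ∀ x ∈ s', ∃ c' ∈ U.erase c, x ∈ labelSet c' := by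
        intro x hx
        obtain ⟨hxs, hxc⟩ := Finset.mem_sdiff.mp hx
        obtain ⟨c'', hc'', hxc''⟩ := hmem x hxs
        refine ⟨c'', Finset.mem_erase.mpr ⟨?_, hc''⟩, hxc''⟩
        intro heq; subst heq; exact hxc hxc''
      have hcard' : (U.erase c).card ≤ n := by
        rw [Finset.card_erase_of_mem hc]
        omega
      obtain ⟨M', hM1, hM2, hM3⟩ := ih (U.erase c) (V.erase d) s' hcard'
        (fun a ha b hb hab => hU a (Finset.mem_of_mem_erase ha) b (Finset.mem_of_mem_erase hb) hab)
        (fun a ha b hb hab => hV a (Finset.mem_of_mem_erase ha) b (Finset.mem_of_mem_erase hb) hab)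
        hmem' hrel''
      have hnotin : (c, d) ∉ M' := by
        intro hmem''
        have := (hM1 _ hmem'').1
        exact (Finset.mem_erase.mp this).1 rfl
      refine ⟨insert (c, d) M', ?_, ?_, ?_⟩
      · intro p hp
        rcases Finset.mem_insert.mp hp with rfl | hp'
        · exact ⟨hc, hdV'⟩
        · exact ⟨Finset.mem_of_mem_erase (hM1 p hp').1,
            Finset.mem_of_mem_erase (hM1 p hp').2⟩
      · intro p hp q hq hpq
        rcases Finset.mem_insert.mp hp with rfl | hp' <;>
          rcases Finset.mem_insert.mp hq with rfl | hq'
        · exact absurd rfl hpq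
        · constructor
          · intro h; exact (Finset.mem_erase.mp (hM1 q hq').1).1 h.symm
          · intro h; exact (Finset.mem_erase.mp (hM1 q hq').2).1 h.symm
        · constructor
          · intro h; exact (Finset.mem_erase.mp (hM1 p hp').1).1 h
          · intro h; exact (Finset.mem_erase.mp (hM1 p hp').2).1 h
        · exact hM2 p hp' q hq' hpq
      · -- cardinality accounting
        have hsplit : s'.card + (s ∩ labelSet c).card = s.card := by
          rw [hs']
          exact Finset.card_sdiff_add_card_inter s (labelSet c)
        have hrrcd : (s ∩ labelSet c).card ≤ rr c d := by
          apply le_rr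
          · intro x hx
            obtain ⟨hxs, hxc⟩ := Finset.mem_inter.mp hx
            refine Finset.mem_inter.mpr ⟨hxc, ?_⟩
            have : x ∈ labelSet d ∩ s := by
              rw [← hcd]; exact Finset.mem_inter.mpr ⟨hxc, hxs⟩
            exact (Finset.mem_inter.mp this).1
          · have e1 : restrict c (s ∩ labelSet c) = restrict c s := by
              apply restrict_congr
              intro a ha
              have := mem_labelSet.mpr ha
              simp only [Finset.mem_inter]
              exact ⟨fun h => h.1, fun h => ⟨h, this⟩⟩
            have e2 : restrict d (s ∩ labelSet c) = restrict d s := by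
              apply restrict_congr
              intro a ha
              have had := mem_labelSet.mpr ha
              simp only [Finset.mem_inter]
              constructor
              · exact fun h => h.1
              · intro h
                refine ⟨h, ?_⟩
                have : a ∈ labelSet c ∩ s := by
                  rw [hcd]; exact Finset.mem_inter.mpr ⟨had, h⟩
                exact (Finset.mem_inter.mp this).1
            rw [e1, e2, hr, hdb]
            exact hIso
        have hsum : ∑ p ∈ insert (c, d) M', rr p.1 p.2 = rr c d + ∑ p ∈ M', rr p.1 p.2 :=
          Finset.sum_insert hnotin
        rw [hsum]
        omega
    · -- no child of U survives: s is empty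
      push_neg at hex
      have hse : s = ∅ := by
        by_contra hne
        obtain ⟨x, hx⟩ := Finset.nonempty_iff_ne_empty.mpr hne
        obtain ⟨c, hc, hxc⟩ := hmem x hx
        cases hrc : restrict c s with
        | some r => exact (hex c hc r) hrc
        | none =>
          rw [restrict_eq_none_iff] at hrc
          have : x ∈ (labelList c).filter (· ∈ s) :=
            List.mem_filter.mpr ⟨mem_labelSet.mp hxc, by simpa using hx⟩
          rw [hrc] at this
          simp at this
      subst hse
      exact ⟨∅, by simp, by simp, by simp⟩

end ETree

namespace ETree

variable {L : Type} [DecidableEq L]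

set_option linter.unusedSectionVars false
set_option maxHeartbeats 1000000

theorem multiset_filterMap_add {α β : Type*} (g : α → Option β) (m₁ m₂ : Multiset α) :
    (m₁ + m₂).filterMap g = m₁.filterMap g + m₂.filterMap g := by
  induction m₁ using Multiset.induction_on with
  | empty => simp [Multiset.filterMap_zero]
  | cons a m ih =>
    cases hg : g a with
    | none =>
      rw [Multiset.cons_add, Multiset.filterMap_cons_none _ _ hg,
        Multiset.filterMap_cons_none _ _ hg, ih]
    | some b =>
      rw [Multiset.cons_add, Multiset.filterMap_cons_some _ _ _ hg,
        Multiset.filterMap_cons_some _ _ _ hg, ih, Multiset.cons_add]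

theorem multiset_filterMap_eq_zero {α β : Type*} {g : α → Option β} {m : Multiset α}
    (h : ∀ a ∈ m, g a = none) : m.filterMap g = 0 := by
  induction m using Multiset.induction_on with
  | empty => simp [Multiset.filterMap_zero]
  | cons a m ih =>
    rw [Multiset.filterMap_cons_none _ _ (h a (by simp))]
    exact ih fun b hb => h b (by simp [hb])

theorem build_lemma {us vs : List (ETree L)}
    (hndu : us.Nodup) (hndv : vs.Nodup)
    (hU : ∀ a ∈ us, ∀ b ∈ us, a ≠ b → Disjoint (labelSet a) (labelSet b))
    (hV : ∀ a ∈ vs, ∀ b ∈ vs, a ≠ b → Disjoint (labelSet a) (labelSet b))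
    (M : Finset (ETree L × ETree L))
    (h1 : ∀ p ∈ M, p.1 ∈ us.toFinset ∧ p.2 ∈ vs.toFinset)
    (h2 : ∀ p ∈ M, ∀ q ∈ M, p ≠ q → p.1 ≠ q.1 ∧ p.2 ≠ q.2) :
    ∑ p ∈ M, rr p.1 p.2 ≤ rr (node us) (node vs) := by
  classical
  -- optimal agreement sets for each pair
  set F : ETree L × ETree L → Finset L := fun p => Classical.choose (rr_spec p.1 p.2) with hF
  have hFsub : ∀ p : ETree L × ETree L, F p ⊆ labelSet p.1 ∩ labelSet p.2 :=
    fun p => (Classical.choose_spec (rr_spec p.1 p.2)).1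
  have hFcard : ∀ p : ETree L × ETree L, (F p).card = rr p.1 p.2 :=
    fun p => (Classical.choose_spec (rr_spec p.1 p.2)).2.1
  have hFiso : ∀ p : ETree L × ETree L, IsoO (restrict p.1 (F p)) (restrict p.2 (F p)) :=
    fun p => (Classical.choose_spec (rr_spec p.1 p.2)).2.2
  set s : Finset L := M.biUnion F with hs
  -- each matched pair sees exactly its own agreement set
  have key1 : ∀ p ∈ M, ∀ a ∈ labelList p.1, (a ∈ s ↔ a ∈ F p) := by
    intro p hp a ha
    constructor
    · intro has
      obtain ⟨q, hq, haq⟩ := Finset.mem_biUnion.mp has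
      by_cases hpq : q = p
      · subst hpq; exact haq
      · exfalso
        have hne : p.1 ≠ q.1 := (h2 p hp q hq (fun h => hpq h.symm)).1
        have hq1 : a ∈ labelSet q.1 :=
          (Finset.mem_inter.mp (hFsub q haq)).1
        have hdisj := hU p.1 (List.mem_toFinset.mp (h1 p hp).1) q.1
          (List.mem_toFinset.mp (h1 q hq).1) hne
        exact Finset.disjoint_left.mp hdisj (mem_labelSet.mpr ha) hq1
    · intro haF
      exact Finset.mem_biUnion.mpr ⟨p, hp, haF⟩
  have key2 : ∀ p ∈ M, ∀ a ∈ labelList p.2, (a ∈ s ↔ a ∈ F p) := by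
    intro p hp a ha
    constructor
    · intro has
      obtain ⟨q, hq, haq⟩ := Finset.mem_biUnion.mp has
      by_cases hpq : q = p
      · subst hpq; exact haq
      · exfalso
        have hne : p.2 ≠ q.2 := (h2 p hp q hq (fun h => hpq h.symm)).2
        have hq2 : a ∈ labelSet q.2 :=
          (Finset.mem_inter.mp (hFsub q haq)).2
        have hdisj := hV p.2 (List.mem_toFinset.mp (h1 p hp).2) q.2
          (List.mem_toFinset.mp (h1 q hq).2) hne
        exact Finset.disjoint_left.mp hdisj (mem_labelSet.mpr ha) hq2
    · intro haF
      exact Finset.mem_biUnion.mpr ⟨p, hp, haF⟩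
  have hres1 : ∀ p ∈ M, restrict p.1 s = restrict p.1 (F p) :=
    fun p hp => restrict_congr _ (key1 p hp)
  have hres2 : ∀ p ∈ M, restrict p.2 s = restrict p.2 (F p) :=
    fun p hp => restrict_congr _ (key2 p hp)
  -- the filterMap over the children lists
  have main : ∀ (ws : List (ETree L)) (pr : ETree L × ETree L → ETree L),
      ws.Nodup → (∀ p ∈ M, pr p ∈ ws.toFinset) →
      (∀ p ∈ M, ∀ q ∈ M, p ≠ q → pr p ≠ pr q) →
      (∀ a ∈ ws, ∀ b ∈ ws, a ≠ b → Disjoint (labelSet a) (labelSet b)) →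
      (∀ p ∈ M, restrict (pr p) s = restrict (pr p) (F p)) →
      (∀ p : ETree L × ETree L, F p ⊆ labelSet (pr p)) →
      (↑(ws.filterMap (fun t => restrict t s)) : Multiset (ETree L))
        = M.val.filterMap (fun p => restrict (pr p) (F p)) := by
    intro ws pr hnd hmem hinj hdisj hres hFpr
    have hcoe : (↑(ws.filterMap (fun t => restrict t s)) : Multiset (ETree L))
        = Multiset.filterMap (fun t => restrict t s) ws.toFinset.val := by
      rw [toFinset_val_of_nodup hnd]
      rfl
    rw [hcoe]
    set W : Finset (ETree L) := M.image pr with hW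
    have hWsub : W ⊆ ws.toFinset := by
      intro x hx
      obtain ⟨p, hp, rfl⟩ := Finset.mem_image.mp hx
      exact hmem p hp
    have hsplit : ws.toFinset.val = W.val + (ws.toFinset \ W).val := by
      rw [Finset.sdiff_val]
      exact (add_tsub_cancel_of_le (Finset.val_le_iff.mpr hWsub)).symm
    rw [hsplit, multiset_filterMap_add]
    have hzero : Multiset.filterMap (fun t => restrict t s) (ws.toFinset \ W).val = 0 := by
      apply multiset_filterMap_eq_zero
      intro x hx
      have hx' := Finset.mem_sdiff.mp (Finset.mem_val.mp hx)
      rw [restrict_eq_none_iff]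
      rw [List.filter_eq_nil_iff]
      intro a ha hasb
      have has : a ∈ s := by simpa using hasb
      obtain ⟨q, hq, haq⟩ := Finset.mem_biUnion.mp has
      have hq1 : a ∈ labelSet (pr q) := hFpr q haq
      have hne : x ≠ pr q := by
        intro heq
        exact hx'.2 (heq ▸ Finset.mem_image.mpr ⟨q, hq, rfl⟩)
      have hdisj' := hdisj x (List.mem_toFinset.mp hx'.1) (pr q)
        (List.mem_toFinset.mp (hmem q hq)) hne
      exact Finset.disjoint_left.mp hdisj' (mem_labelSet.mpr ha) hq1
    rw [hzero, add_zero]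
    have hWval : W.val = M.val.map pr := by
      rw [hW]
      apply Finset.image_val_of_injOn
      intro p hp q hq hpq
      by_contra hne
      exact hinj p (Finset.mem_coe.mp hp) q (Finset.mem_coe.mp hq) hne hpq
    rw [hWval, Multiset.filterMap_map]
    apply multiset_filterMap_congr
    intro p hp
    exact hres p (Finset.mem_val.mp hp)
  have hL := main us Prod.fst hndu (fun p hp => (h1 p hp).1)
    (fun p hp q hq hpq => (h2 p hp q hq hpq).1) hU hres1
    (fun p => (hFsub p).trans Finset.inter_subset_left)
  have hR := main vs Prod.snd hndv (fun p hp => (h1 p hp).2)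
    (fun p hp q hq hpq => (h2 p hp q hq hpq).2) hV hres2
    (fun p => (hFsub p).trans Finset.inter_subset_right)
  have hrel : Multiset.Rel Iso
      (↑(us.filterMap (fun t => restrict t s)) : Multiset (ETree L))
      (↑(vs.filterMap (fun t => restrict t s)) : Multiset (ETree L)) := by
    rw [hL, hR]
    exact rel_filterMap M.val _ _ fun p _ => hFiso p
  have hiso := isoO_of_rel_restrict hrel
  have hsub : s ⊆ labelSet (node us) ∩ labelSet (node vs) := by
    intro x hx
    obtain ⟨p, hp, hxp⟩ := Finset.mem_biUnion.mp hx
    have hx2 := hFsub p hxp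
    rw [Finset.mem_inter] at hx2 ⊢
    exact ⟨labelSet_subset_node (List.mem_toFinset.mp (h1 p hp).1) hx2.1,
      labelSet_subset_node (List.mem_toFinset.mp (h1 p hp).2) hx2.2⟩
  have hcard : s.card = ∑ p ∈ M, rr p.1 p.2 := by
    rw [hs, Finset.card_biUnion]
    · exact Finset.sum_congr rfl fun p _ => hFcard p
    · intro p hp q hq hpq
      have hne := (h2 p hp q hq hpq).1
      have hdisj := hU p.1 (List.mem_toFinset.mp (h1 p hp).1) q.1
        (List.mem_toFinset.mp (h1 q hq).1) hne
      exact Finset.disjoint_of_subset_left ((hFsub p).trans Finset.inter_subset_left)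
        (Finset.disjoint_of_subset_right ((hFsub q).trans Finset.inter_subset_left) hdisj)
  calc ∑ p ∈ M, rr p.1 p.2 = s.card := hcard.symm
    _ ≤ rr (node us) (node vs) := le_rr s hsub hiso

end ETree


open ETree in
/-- Let `S₁` and `S₂` be evolutionary trees, `u` an internal vertex of
`S₁` (with children list `us`) and `v` an internal vertex of `S₂` (with children list
`vs`).  Then `rr(S₁^u, S₂^v) = max { mm(K(u,S₁),K(v,S₂)), mm(u,K(v,S₂)), mm(K(u,S₁),v) }`. -/
theorem rr_eq_max_mm {L : Type} [DecidableEq L] (S₁ S₂ : ETree L)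
    (h₁ : IsEvolutionary S₁) (h₂ : IsEvolutionary S₂)
    (us vs : List (ETree L))
    (hu : IsSubtree (ETree.node us) S₁) (hv : IsSubtree (ETree.node vs) S₂) :
    rr (ETree.node us) (ETree.node vs) =
      max (mm us.toFinset vs.toFinset)
        (max (mm {ETree.node us} vs.toFinset) (mm us.toFinset {ETree.node vs})) := by
  classical
  -- structural facts
  have hnod₁ : (labelList (ETree.node us)).Nodup := nodup_subtree hu h₁.2
  have hnod₂ : (labelList (ETree.node vs)).Nodup := nodup_subtree hv h₂.2
  have hhom₁ : Homeo (ETree.node us) := Homeo.subtree hu h₁.1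
  have hhom₂ : Homeo (ETree.node vs) := Homeo.subtree hv h₂.1
  have hchu : ∀ t ∈ us, Homeo t := by
    cases hhom₁ with | node _ _ h => exact h
  have hchv : ∀ t ∈ vs, Homeo t := by
    cases hhom₂ with | node _ _ h => exact h
  have hneu : ∀ t ∈ us, labelList t ≠ [] := fun t ht => (hchu t ht).labelList_ne_nil
  have hnev : ∀ t ∈ vs, labelList t ≠ [] := fun t ht => (hchv t ht).labelList_ne_nil
  have hndu : us.Nodup := children_nodup hnod₁ hneu
  have hndv : vs.Nodup := children_nodup hnod₂ hnev
  have hU := children_disjoint hnod₁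
  have hV := children_disjoint hnod₂
  apply le_antisymm
  · -- rr ≤ max
    apply rr_le
    intro s hsub hiso
    have hmem : ∀ x ∈ s, ∃ c ∈ us, x ∈ labelSet c := by
      intro x hx
      exact mem_labelSet_node.mp (Finset.mem_inter.mp (hsub hx)).1
    have hmem' : ∀ x ∈ s, ∃ d ∈ vs, x ∈ labelSet d := by
      intro x hx
      exact mem_labelSet_node.mp (Finset.mem_inter.mp (hsub hx)).2
    rw [restrict_node, restrict_node] at hiso
    rcases h1 : us.filterMap (fun t => restrict t s) with _ | ⟨r, _ | ⟨r', rest1⟩⟩ <;>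
      rw [h1] at hiso
    · -- no `u`-child survives: s = ∅
      have hse : s = ∅ := by
        by_contra hne
        obtain ⟨x, hx⟩ := Finset.nonempty_iff_ne_empty.mpr hne
        obtain ⟨c, hc, hxc⟩ := hmem x hx
        have hcn := List.filterMap_eq_nil_iff.mp h1 c hc
        rw [restrict_eq_none_iff] at hcn
        have : x ∈ (labelList c).filter (· ∈ s) :=
          List.mem_filter.mpr ⟨mem_labelSet.mp hxc, by simpa using hx⟩
        rw [hcn] at this
        simp at this
      subst hse
      simp
    · -- exactly one `u`-child survives: charge to mm us {node vs}
      obtain ⟨c, hc, hcr, hothers⟩ := filterMap_eq_singleton_inv h1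
      have hsubc : s ⊆ labelSet c ∩ labelSet (ETree.node vs) := by
        intro x hx
        refine Finset.mem_inter.mpr ⟨?_, (Finset.mem_inter.mp (hsub hx)).2⟩
        obtain ⟨c', hc', hxc'⟩ := hmem x hx
        by_cases hcc : c' = c
        · exact hcc ▸ hxc'
        · exfalso
          have hn := hothers c' hc' hcc
          rw [restrict_eq_none_iff] at hn
          have : x ∈ (labelList c').filter (· ∈ s) :=
            List.mem_filter.mpr ⟨mem_labelSet.mp hxc', by simpa using hx⟩
          rw [hn] at this
          simp at this
      have hle : s.card ≤ rr c (ETree.node vs) := by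
        apply le_rr s hsubc
        rw [hcr, restrict_node]
        exact hiso
      have hle2 : rr c (ETree.node vs) ≤ mm us.toFinset {ETree.node vs} := by
        have := le_mm (U := us.toFinset) (V := {ETree.node vs}) {(c, ETree.node vs)}
          (by intro p hp; rw [Finset.mem_singleton] at hp; subst hp
              exact ⟨List.mem_toFinset.mpr hc, Finset.mem_singleton_self _⟩)
          (by intro p hp q hq hpq
              rw [Finset.mem_singleton] at hp hq
              exact absurd (hp.trans hq.symm) hpq)
        simpa using this
      refine le_trans (hle.trans hle2) ?_
      exact le_trans (le_max_right _ _) (le_max_right _ _)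
    · -- at least two `u`-children survive
      rcases h2' : vs.filterMap (fun t => restrict t s) with _ | ⟨w, _ | ⟨w', rest2⟩⟩ <;>
        rw [h2'] at hiso
      · exact (hiso : False).elim
      · -- exactly one `v`-child survives: charge to mm {node us} vs
        obtain ⟨d, hd, hdw, hothers⟩ := filterMap_eq_singleton_inv h2'
        have hsubd : s ⊆ labelSet (ETree.node us) ∩ labelSet d := by
          intro x hx
          refine Finset.mem_inter.mpr ⟨(Finset.mem_inter.mp (hsub hx)).1, ?_⟩
          obtain ⟨d', hd', hxd'⟩ := hmem' x hx
          by_cases hdd : d' = d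
          · exact hdd ▸ hxd'
          · exfalso
            have hn := hothers d' hd' hdd
            rw [restrict_eq_none_iff] at hn
            have : x ∈ (labelList d').filter (· ∈ s) :=
              List.mem_filter.mpr ⟨mem_labelSet.mp hxd', by simpa using hx⟩
            rw [hn] at this
            simp at this
        have hle : s.card ≤ rr (ETree.node us) d := by
          apply le_rr s hsubd
          rw [restrict_node, h1, hdw]
          exact hiso
        have hle2 : rr (ETree.node us) d ≤ mm {ETree.node us} vs.toFinset := by
          have := le_mm (U := {ETree.node us}) (V := vs.toFinset) {(ETree.node us, d)}
            (by intro p hp; rw [Finset.mem_singleton] at hp; subst hp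
                exact ⟨Finset.mem_singleton_self _, List.mem_toFinset.mpr hd⟩)
            (by intro p hp q hq hpq
                rw [Finset.mem_singleton] at hp hq
                exact absurd (hp.trans hq.symm) hpq)
          simpa using this
        refine le_trans (hle.trans hle2) ?_
        exact le_trans (le_max_left _ _) (le_max_right _ _)
      · -- both sides have ≥ 2 surviving children: use the matching lemma
        have hrel : Multiset.Rel Iso
            (us.toFinset.val.filterMap (fun t => restrict t s))
            (vs.toFinset.val.filterMap (fun t => restrict t s)) := by
          rw [toFinset_val_of_nodup hndu, toFinset_val_of_nodup hndv]
          have := rel_of_iso_node (hiso : Iso (ETree.node (r :: r' :: rest1))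
            (ETree.node (w :: w' :: rest2)))
          rw [← h1, ← h2'] at this
          exact this
        obtain ⟨M, hM1, hM2, hM3⟩ := match_lemma us.toFinset.card us.toFinset vs.toFinset s
          le_rfl
          (fun a ha b hb hab => hU a (List.mem_toFinset.mp ha) b (List.mem_toFinset.mp hb) hab)
          (fun a ha b hb hab => hV a (List.mem_toFinset.mp ha) b (List.mem_toFinset.mp hb) hab)
          (fun x hx => by
            obtain ⟨c, hc, hxc⟩ := hmem x hx
            exact ⟨c, List.mem_toFinset.mpr hc, hxc⟩)
          hrel
        refine le_trans (hM3.trans (le_mm M hM1 hM2)) (le_max_left _ _)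
  · -- max ≤ rr
    apply max_le
    · apply mm_le
      intro M hM1 hM2
      exact build_lemma hndu hndv hU hV M hM1 hM2
    apply max_le
    · -- mm {node us} vs ≤ rr
      apply mm_le
      intro M hM1 hM2
      rcases Finset.eq_empty_or_nonempty M with rfl | ⟨p, hp⟩
      · simp
      have hMp : M = {p} := by
        apply Finset.eq_singleton_iff_unique_mem.mpr
        refine ⟨hp, fun q hq => ?_⟩
        by_contra hne
        have := (hM2 q hq p hp hne).1
        rw [Finset.mem_singleton.mp (hM1 q hq).1, Finset.mem_singleton.mp (hM1 p hp).1] at this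
        exact this rfl
      subst hMp
      rw [Finset.sum_singleton]
      have hp1 : p.1 = ETree.node us := Finset.mem_singleton.mp (hM1 p hp).1
      have hp2 : p.2 ∈ vs := List.mem_toFinset.mp (hM1 p hp).2
      rw [hp1]
      -- rr (node us) d ≤ rr (node us) (node vs)
      apply rr_le
      intro t htsub htiso
      apply le_rr t
      · intro x hx
        have := Finset.mem_inter.mp (htsub hx)
        exact Finset.mem_inter.mpr ⟨this.1, labelSet_subset_node hp2 this.2⟩
      · have hcol : restrict (ETree.node vs) t = restrict p.2 t := by
          apply restrict_node_collapse hp2 hndv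
          intro d' hd' hdd
          rw [restrict_eq_none_iff, List.filter_eq_nil_iff]
          intro a ha hat
          have hat' : a ∈ t := by simpa using hat
          have had : a ∈ labelSet p.2 := (Finset.mem_inter.mp (htsub hat')).2
          have hdisj := hV d' hd' p.2 hp2 hdd
          exact Finset.disjoint_left.mp hdisj (mem_labelSet.mpr ha) had
        rw [hcol]
        exact htiso
    · -- mm us {node vs} ≤ rr
      apply mm_le
      intro M hM1 hM2
      rcases Finset.eq_empty_or_nonempty M with rfl | ⟨p, hp⟩
      · simp
      have hMp : M = {p} := by
        apply Finset.eq_singleton_iff_unique_mem.mpr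
        refine ⟨hp, fun q hq => ?_⟩
        by_contra hne
        have := (hM2 q hq p hp hne).2
        rw [Finset.mem_singleton.mp (hM1 q hq).2, Finset.mem_singleton.mp (hM1 p hp).2] at this
        exact this rfl
      subst hMp
      rw [Finset.sum_singleton]
      have hp2 : p.2 = ETree.node vs := Finset.mem_singleton.mp (hM1 p hp).2
      have hp1 : p.1 ∈ us := List.mem_toFinset.mp (hM1 p hp).1
      rw [hp2]
      apply rr_le
      intro t htsub htiso
      apply le_rr t
      · intro x hx
        have := Finset.mem_inter.mp (htsub hx)
        exact Finset.mem_inter.mpr ⟨labelSet_subset_node hp1 this.1, this.2⟩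
      · have hcol : restrict (ETree.node us) t = restrict p.1 t := by
          apply restrict_node_collapse hp1 hndu
          intro c' hc' hcc
          rw [restrict_eq_none_iff, List.filter_eq_nil_iff]
          intro a ha hat
          have hat' : a ∈ t := by simpa using hat
          have hac : a ∈ labelSet p.1 := (Finset.mem_inter.mp (htsub hat')).1
          have hdisj := hU c' hc' p.1 hp1 hcc
          exact Finset.disjoint_left.mp hdisj (mem_labelSet.mpr ha) hac
        rw [hcol]
        exact htiso
end
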